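/- For every integer R ≥ 2, the upper bound l*(R) satisfies the two-sided estimate (l*(R) − 1)/R < 1 − 1/e < (l*(R) + 2)/(R + 1). -/

import Mathlib

/-- The `n`-th harmonic number `H_n = 1 + 1/2 + ... + 1/n` (with `H_0 = 0`). -/
noncomputable def H (n : ℕ) : ℝ := ∑ k ∈ Finset.Icc 1 n, (1 : ℝ) / k

/-- `l` is the upper bound `l*` for endowment `R`:
the unique `1 ≤ l ≤ R - 1` with `H_R - H_{R-l} < 1 < H_R - H_{R-l-1}`. -/
def IsUpperBound (R l : ℕ) : Prop :=
  1 ≤ l ∧ l ≤ R - 1 ∧ H R - H (R - l) < 1 ∧ 1 < H R - H (R - l - 1)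

lemma H_sub (m R : ℕ) (h : m ≤ R) :
    H R - H m = ∑ k ∈ Finset.Ioc m R, (1 : ℝ) / k := by
  unfold H
  rw [show (1 : ℕ) = 0 + 1 from rfl, Finset.Icc_add_one_left_eq_Ioc, Finset.Icc_add_one_left_eq_Ioc]
  have := Finset.sum_Ioc_consecutive (fun k : ℕ => (1 : ℝ) / k) (Nat.zero_le m) h
  linarith

lemma sumA (m : ℕ) : ∀ n, m ≤ n →
    Real.log ((n : ℝ) + 1) - Real.log ((m : ℝ) + 1) ≤ ∑ k ∈ Finset.Ioc m n, (1 : ℝ) / k := by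
  intro n hn
  induction n, hn using Nat.le_induction with
  | base => simp
  | succ n hmn ih =>
    rw [Finset.sum_Ioc_succ_top (by omega)]
    have h1 : (0 : ℝ) < (n : ℝ) + 1 := by positivity
    have h2 : (0 : ℝ) < (n : ℝ) + 2 := by positivity
    have := Real.log_le_sub_one_of_pos (x := ((n : ℝ) + 2) / ((n : ℝ) + 1)) (by positivity)
    rw [Real.log_div (by positivity) (by positivity)] at this
    have h3 : ((n : ℝ) + 2) / ((n : ℝ) + 1) - 1 = 1 / ((n : ℝ) + 1) := by
      field_simp
      norm_num
    push_cast
    push_cast at ih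
    have hc : ((n : ℝ) + 1 + 1) = (n : ℝ) + 2 := by ring
    rw [hc]
    linarith

lemma sumB (m : ℕ) (hm : 1 ≤ m) : ∀ n, m ≤ n →
    ∑ k ∈ Finset.Ioc m n, (1 : ℝ) / k ≤ Real.log (n : ℝ) - Real.log (m : ℝ) := by
  intro n hn
  induction n, hn using Nat.le_induction with
  | base => simp
  | succ n hmn ih =>
    rw [Finset.sum_Ioc_succ_top (by omega)]
    have hn1 : 1 ≤ n := le_trans hm hmn
    have h0 : (0 : ℝ) < (n : ℝ) := by exact_mod_cast hn1
    have h1 : (0 : ℝ) < (n : ℝ) + 1 := by positivity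
    have := Real.log_le_sub_one_of_pos (x := (n : ℝ) / ((n : ℝ) + 1)) (by positivity)
    rw [Real.log_div (by positivity) (by positivity)] at this
    have h3 : (n : ℝ) / ((n : ℝ) + 1) - 1 = -(1 / ((n : ℝ) + 1)) := by field_simp; ring
    push_cast
    push_cast at ih
    linarith

/-- The two-sided estimate `(l* - 1)/R < 1 - 1/e < (l* + 2)/(R + 1)`. -/
theorem upper_bound_two_sided_estimate (R l : ℕ) (hR : 2 ≤ R) (hl : IsUpperBound R l) :
    ((l : ℝ) - 1) / R < 1 - 1 / Real.exp 1 ∧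
    1 - 1 / Real.exp 1 < ((l : ℝ) + 2) / ((R : ℝ) + 1) := by
  obtain ⟨hl1, hl2, hlt, hgt⟩ := hl
  have hlR : l + 1 ≤ R := by omega
  have he : (2 : ℝ) < Real.exp 1 := by
    have := Real.exp_one_gt_d9; linarith
  have he0 : (0 : ℝ) < Real.exp 1 := by linarith
  have hR0 : (0 : ℝ) < (R : ℝ) := by positivity
  have hR1 : (0 : ℝ) < (R : ℝ) + 1 := by positivity
  constructor
  · -- first inequality
    set m := R - l with hm
    have hmR : m ≤ R := by omega
    have hmcast : (m : ℝ) = (R : ℝ) - (l : ℝ) := by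
      rw [hm]; push_cast [Nat.cast_sub (by omega : l ≤ R)]; ring
    rw [H_sub m R hmR] at hlt
    have hA := sumA m R hmR
    have hlog : Real.log (((R : ℝ) + 1) / ((m : ℝ) + 1)) < 1 := by
      rw [Real.log_div (by positivity) (by positivity)]
      linarith
    have hexp : ((R : ℝ) + 1) / ((m : ℝ) + 1) < Real.exp 1 := by
      have h := Real.exp_lt_exp.mpr hlog
      rwa [Real.exp_log (by positivity)] at h
    have hm1 : (0 : ℝ) < (m : ℝ) + 1 := by positivity
    rw [div_lt_iff₀ hm1] at hexp
    rw [hmcast] at hexp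
    rw [div_lt_iff₀ hR0]
    have h1e : 1 - 1 / Real.exp 1 = (Real.exp 1 - 1) / Real.exp 1 := by field_simp
    rw [h1e, div_mul_eq_mul_div, lt_div_iff₀ he0]
    nlinarith
  · -- second inequality
    by_cases hcase : l + 2 ≤ R
    · set m := R - l - 1 with hm
      have hm1 : 1 ≤ m := by omega
      have hmR : m ≤ R := by omega
      have hmcast : (m : ℝ) = (R : ℝ) - (l : ℝ) - 1 := by
        have : (m : ℕ) = R - (l + 1) := by omega
        rw [this]; push_cast [Nat.cast_sub (by omega : l + 1 ≤ R)]; ring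
      rw [H_sub m R hmR] at hgt
      have hB := sumB m hm1 R hmR
      have hm0 : (0 : ℝ) < (m : ℝ) := by exact_mod_cast hm1
      have hlog : 1 < Real.log ((R : ℝ) / (m : ℝ)) := by
        rw [Real.log_div (by positivity) (by positivity)]
        linarith
      have hexp : Real.exp 1 < (R : ℝ) / (m : ℝ) := by
        have h := Real.exp_lt_exp.mpr hlog
        rwa [Real.exp_log (by positivity)] at h
      rw [lt_div_iff₀ hm0] at hexp
      rw [hmcast] at hexp
      have h1e : 1 - 1 / Real.exp 1 = (Real.exp 1 - 1) / Real.exp 1 := by field_simp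
      rw [h1e, div_lt_div_iff₀ he0 hR1]
      nlinarith
    · -- l = R - 1, so (l+2)/(R+1) = 1
      have hlR' : l = R - 1 := by omega
      have hcast : (l : ℝ) = (R : ℝ) - 1 := by
        rw [hlR']; push_cast [Nat.cast_sub (by omega : 1 ≤ R)]; ring
      rw [hcast]
      have : ((R : ℝ) - 1 + 2) / ((R : ℝ) + 1) = 1 := by field_simp; ring
      rw [this]
      have : 0 < 1 / Real.exp 1 := by positivity
      linarith
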